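/- For every Borel probability measure G on (0,∞) with 0 < μ*(G) < ∞, there exists a Borel probability measure G' supported on the finite set of observed points {x_1, ..., x_m, y_1, ..., y_n}, with 0 < μ*(G') < ∞, such that L(G') ≥ L(G). -/

import Mathlib

open MeasureTheory Finset

/-- For every Borel probability measure `G` on `(0,∞)` with
`0 < μ*(G) < ∞`, there exists a Borel probability measure `G'` supported on the finite
set of observed points `{x_1, ..., x_m, y_1, ..., y_n}`, with `0 < μ*(G') < ∞`, such
that `L(G') ≥ L(G)`, where `μ*(H) = ∫_{(0,∞)} W dH` and
`L(H) = ∏_i (H({x_i}) / μ*(H)) · ∏_j (H([y_j,∞)) / μ*(H))`. -/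
theorem stmt13 (W : ℝ → ℝ) (hWpos : ∀ v : ℝ, 0 < v → 0 < W v)
    (hWmono : MonotoneOn W (Set.Ioi 0))
    (hWrc : ∀ v : ℝ, 0 < v → ContinuousWithinAt W (Set.Ici v) v)
    (m n : ℕ) (hmn : 1 ≤ m + n)
    (x : Fin m → ℝ) (hx : ∀ i, 0 < x i) (y : Fin n → ℝ) (hy : ∀ j, 0 < y j)
    (μstar : Measure ℝ → ENNReal)
    (hμstar : ∀ H : Measure ℝ, μstar H = ∫⁻ v in Set.Ioi (0 : ℝ), ENNReal.ofReal (W v) ∂H)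
    (L : Measure ℝ → ENNReal)
    (hL : ∀ H : Measure ℝ,
      L H = (∏ i, H {x i} / μstar H) * ∏ j, H (Set.Ici (y j)) / μstar H)
    (G : Measure ℝ) [IsProbabilityMeasure G] (hG : G (Set.Iic 0) = 0)
    (hμ0 : μstar G ≠ 0) (hμtop : μstar G ≠ ⊤) :
    ∃ G' : Measure ℝ, IsProbabilityMeasure G' ∧
      G' ((Set.range x ∪ Set.range y)ᶜ) = 0 ∧
      μstar G' ≠ 0 ∧ μstar G' ≠ ⊤ ∧ L G ≤ L G' := by
  classical
  set S : Finset ℝ := (Finset.univ.image x) ∪ (Finset.univ.image y) with hSdef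
  have hSU : (↑S : Set ℝ) = Set.range x ∪ Set.range y := by
    simp [hSdef, Set.image_univ]
  have hSne : S.Nonempty := by
    rcases (by omega : 0 < m ∨ 0 < n) with hm | hn
    · exact ⟨x ⟨0, hm⟩, by simp [hSdef]⟩
    · exact ⟨y ⟨0, hn⟩, by simp [hSdef]⟩
  have hSpos : ∀ z ∈ S, (0 : ℝ) < z := by
    intro z hz
    simp only [hSdef, Finset.mem_union, Finset.mem_image, Finset.mem_univ, true_and] at hz
    rcases hz with ⟨i, rfl⟩ | ⟨j, rfl⟩
    exacts [hx i, hy j]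
  set t₁ : ℝ := S.min' hSne with ht₁def
  have ht₁S : t₁ ∈ S := S.min'_mem hSne
  have ht₁pos : 0 < t₁ := hSpos _ ht₁S
  set τ : ℝ → ℝ := fun v =>
    if h : (S.filter (· ≤ v)).Nonempty then (S.filter (· ≤ v)).max' h else t₁ with hτdef
  have hτS : ∀ v, τ v ∈ S := by
    intro v
    by_cases h : (S.filter (· ≤ v)).Nonempty
    · simp only [hτdef, dif_pos h]
      exact Finset.mem_of_mem_filter _ (Finset.max'_mem _ h)
    · simp only [hτdef, dif_neg h]; exact ht₁S
  have hτge : ∀ v, t₁ ≤ τ v := fun v => S.min'_le _ (hτS v)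
  have hτpos : ∀ v, 0 < τ v := fun v => lt_of_lt_of_le ht₁pos (hτge v)
  have hτle : ∀ v, t₁ ≤ v → τ v ≤ v := by
    intro v hv
    have hne : (S.filter (· ≤ v)).Nonempty := ⟨t₁, Finset.mem_filter.mpr ⟨ht₁S, hv⟩⟩
    simp only [hτdef, dif_pos hne]
    exact Finset.max'_le _ _ _ fun t ht => (Finset.mem_filter.mp ht).2
  have hτmem_ge : ∀ z ∈ S, ∀ v, z ≤ v → z ≤ τ v := by
    intro z hz v hzv
    have hne : (S.filter (· ≤ v)).Nonempty := ⟨z, Finset.mem_filter.mpr ⟨hz, hzv⟩⟩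
    simp only [hτdef, dif_pos hne]
    exact Finset.le_max' (S.filter (· ≤ v)) z (Finset.mem_filter.mpr ⟨hz, hzv⟩)
  have hτid : ∀ z ∈ S, τ z = z := fun z hz =>
    le_antisymm (hτle z (S.min'_le _ hz)) (hτmem_ge z hz z le_rfl)
  have hτmono : Monotone τ := by
    intro v w hvw
    by_cases h : (S.filter (· ≤ v)).Nonempty
    · have hsub : S.filter (· ≤ v) ⊆ S.filter (· ≤ w) :=
        Finset.monotone_filter_right S (fun t _ ht => le_trans ht hvw)
      have h' : (S.filter (· ≤ w)).Nonempty := h.mono hsub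
      simp only [hτdef, dif_pos h, dif_pos h']
      exact Finset.max'_subset h hsub
    · have hv0 : τ v = t₁ := by simp only [hτdef, dif_neg h]
      rw [hv0]
      exact hτge w
  have hτm : Measurable τ := hτmono.measurable
  set c : ENNReal := G (Set.Ici t₁) with hcdef
  have hcne_top : c ≠ ⊤ := measure_ne_top G _
  have hW1pos : (0 : ℝ) < W t₁ := hWpos t₁ ht₁pos
  have hW1ne : ENNReal.ofReal (W t₁) ≠ 0 := by
    simp [ENNReal.ofReal_eq_zero, not_le, hW1pos]
  by_cases hc : c = 0
  · -- all mass of G is below t₁ : then L G = 0 and a Dirac mass works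
    have ht₁U : t₁ ∈ Set.range x ∪ Set.range y := by
      rw [← hSU]; exact_mod_cast ht₁S
    have hLG : L G = 0 := by
      rw [hL]
      rcases (by omega : 0 < m ∨ 0 < n) with hm | hn
      · have hx0 : G {x ⟨0, hm⟩} = 0 := by
          refine measure_mono_null ?_ hc
          intro v hv
          rw [Set.mem_singleton_iff] at hv; subst hv
          exact S.min'_le _ (by simp [hSdef])
        have : (∏ i, G {x i} / μstar G) = 0 :=
          Finset.prod_eq_zero (Finset.mem_univ ⟨0, hm⟩) (by rw [hx0, ENNReal.zero_div])
        rw [this, zero_mul]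
      · have hy0 : G (Set.Ici (y ⟨0, hn⟩)) = 0 := by
          refine measure_mono_null ?_ hc
          intro v hv
          exact le_trans (S.min'_le _ (by simp [hSdef])) hv
        have : (∏ j, G (Set.Ici (y j)) / μstar G) = 0 :=
          Finset.prod_eq_zero (Finset.mem_univ ⟨0, hn⟩) (by rw [hy0, ENNReal.zero_div])
        rw [this, mul_zero]
    have hμd : μstar (Measure.dirac t₁) = ENNReal.ofReal (W t₁) := by
      rw [hμstar, setLIntegral_dirac, if_pos (Set.mem_Ioi.mpr ht₁pos)]
    refine ⟨Measure.dirac t₁, inferInstance, ?_, ?_, ?_, ?_⟩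
    · rw [Measure.dirac_apply]
      exact Set.indicator_of_notMem (Set.notMem_compl_iff.mpr ht₁U) _
    · rw [hμd]; exact hW1ne
    · rw [hμd]; exact ENNReal.ofReal_ne_top
    · rw [hLG]; exact zero_le
  · -- main case : push the mass in [t₁, ∞) down to observed points and renormalize
    set ν : Measure ℝ := Measure.map τ (G.restrict (Set.Ici t₁)) with hνdef
    set G' : Measure ℝ := c⁻¹ • ν with hG'def
    have hνap : ∀ A : Set ℝ, MeasurableSet A → ν A = G (τ ⁻¹' A ∩ Set.Ici t₁) := by
      intro A hA
      rw [hνdef, Measure.map_apply hτm hA, Measure.restrict_apply (hτm hA)]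
    have hG'ap : ∀ A : Set ℝ, MeasurableSet A → G' A = c⁻¹ * G (τ ⁻¹' A ∩ Set.Ici t₁) := by
      intro A hA
      rw [hG'def, Measure.smul_apply, smul_eq_mul, hνap A hA]
    have hG'prob : IsProbabilityMeasure G' := by
      constructor
      rw [hG'ap _ MeasurableSet.univ]
      simp only [Set.preimage_univ, Set.univ_inter, ← hcdef]
      exact ENNReal.inv_mul_cancel hc hcne_top
    -- the weight function, modified to be measurable
    set g' : ℝ → ENNReal := fun v => ENNReal.ofReal (W (max v t₁)) with hg'def
    have hg'mono : Monotone fun v => W (max v t₁) := by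
      intro v w hvw
      exact hWmono (Set.mem_Ioi.mpr (lt_of_lt_of_le ht₁pos (le_max_right v t₁)))
        (Set.mem_Ioi.mpr (lt_of_lt_of_le ht₁pos (le_max_right w t₁)))
        (max_le_max hvw le_rfl)
    have hg'm : Measurable g' := ENNReal.measurable_ofReal.comp hg'mono.measurable
    have hν_Iio : ν (Set.Iio t₁) = 0 := by
      rw [hνap _ measurableSet_Iio]
      have : τ ⁻¹' Set.Iio t₁ = ∅ := by
        rw [Set.eq_empty_iff_forall_notMem]
        intro v hv
        exact absurd (hτge v) (not_le.mpr hv)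
      rw [this, Set.empty_inter, measure_empty]
    have hν_ae : ∀ᵐ v ∂ν, v ∈ Set.Ici t₁ := by
      rw [ae_iff]
      have : {v : ℝ | ¬ v ∈ Set.Ici t₁} = Set.Iio t₁ := by
        ext v; simp [not_le]
      rw [this]; exact hν_Iio
    set I : ENNReal := ∫⁻ v in Set.Ici t₁, ENNReal.ofReal (W (τ v)) ∂G with hIdef
    have hμν : ∫⁻ v in Set.Ioi 0, ENNReal.ofReal (W v) ∂ν = I := by
      have h1 : ∫⁻ v in Set.Ioi 0, ENNReal.ofReal (W v) ∂ν = ∫⁻ v in Set.Ioi 0, g' v ∂ν := by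
        refine lintegral_congr_ae ?_
        filter_upwards [ae_restrict_of_ae hν_ae] with v hv
        rw [hg'def]
        simp only [max_eq_left (Set.mem_Ici.mp hv)]
      rw [h1, hνdef, setLIntegral_map measurableSet_Ioi hg'm hτm]
      have hpre : τ ⁻¹' Set.Ioi 0 = Set.univ := by
        rw [Set.eq_univ_iff_forall]
        exact fun v => Set.mem_preimage.mpr (Set.mem_Ioi.mpr (hτpos v))
      rw [hpre, Measure.restrict_univ, hIdef]
      refine lintegral_congr fun v => ?_
      rw [hg'def]
      simp only [max_eq_left (hτge v)]
    have hμG' : μstar G' = c⁻¹ * I := by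
      rw [hμstar, hG'def, Measure.restrict_smul, lintegral_smul_measure, hμν, smul_eq_mul]
    have hIle : I ≤ μstar G := by
      calc I ≤ ∫⁻ v in Set.Ici t₁, ENNReal.ofReal (W v) ∂G := by
              refine lintegral_mono_ae ?_
              filter_upwards [ae_restrict_mem measurableSet_Ici] with v hv
              exact ENNReal.ofReal_le_ofReal
                (hWmono (Set.mem_Ioi.mpr (hτpos v))
                  (Set.mem_Ioi.mpr (lt_of_lt_of_le ht₁pos hv)) (hτle v hv))
        _ ≤ ∫⁻ v in Set.Ioi 0, ENNReal.ofReal (W v) ∂G :=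
              lintegral_mono_set (fun v hv => lt_of_lt_of_le ht₁pos hv)
        _ = μstar G := (hμstar G).symm
    have hIge : ENNReal.ofReal (W t₁) * c ≤ I := by
      have h2 : ∫⁻ _ in Set.Ici t₁, ENNReal.ofReal (W t₁) ∂G ≤ I := by
        refine lintegral_mono_ae ?_
        filter_upwards [ae_restrict_mem measurableSet_Ici] with v _
        exact ENNReal.ofReal_le_ofReal
          (hWmono (Set.mem_Ioi.mpr ht₁pos) (Set.mem_Ioi.mpr (hτpos v)) (hτge v))
      rwa [setLIntegral_const] at h2
    have hI0 : I ≠ 0 := by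
      intro h
      rw [h, le_zero_iff] at hIge
      exact (mul_ne_zero hW1ne hc) hIge
    have hItop : I ≠ ⊤ := fun h => hμtop (top_le_iff.mp (h ▸ hIle))
    have hcinv0 : c⁻¹ ≠ 0 := ENNReal.inv_ne_zero.mpr hcne_top
    have hcinvtop : c⁻¹ ≠ ⊤ := ENNReal.inv_ne_top.mpr hc
    have hμ'0 : μstar G' ≠ 0 := by rw [hμG']; exact mul_ne_zero hcinv0 hI0
    have hμ'top : μstar G' ≠ ⊤ := by rw [hμG']; exact ENNReal.mul_ne_top hcinvtop hItop
    have hμG'le : μstar G' ≤ c⁻¹ * μstar G := by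
      rw [hμG']; exact mul_le_mul_right hIle _
    have hfac : ∀ a a' : ENNReal, c⁻¹ * a ≤ a' → a / μstar G ≤ a' / μstar G' := by
      intro a a' ha
      calc a / μstar G = (c⁻¹ * a) / (c⁻¹ * μstar G) :=
            (ENNReal.mul_div_mul_left a (μstar G) hcinv0 hcinvtop).symm
        _ ≤ a' / μstar G' := ENNReal.div_le_div ha hμG'le
    have hnx : ∀ i, c⁻¹ * G {x i} ≤ G' {x i} := by
      intro i
      have hxiS : x i ∈ S := by simp [hSdef]
      rw [hG'ap _ (measurableSet_singleton _)]
      refine mul_le_mul_right (measure_mono ?_) _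
      intro v hv
      rw [Set.mem_singleton_iff] at hv; subst hv
      exact ⟨Set.mem_preimage.mpr (Set.mem_singleton_iff.mpr (hτid _ hxiS)), S.min'_le _ hxiS⟩
    have hny : ∀ j, c⁻¹ * G (Set.Ici (y j)) ≤ G' (Set.Ici (y j)) := by
      intro j
      have hyjS : y j ∈ S := by simp [hSdef]
      rw [hG'ap _ measurableSet_Ici]
      refine mul_le_mul_right (measure_mono ?_) _
      intro v hv
      exact ⟨Set.mem_preimage.mpr (hτmem_ge _ hyjS v hv), le_trans (S.min'_le _ hyjS) hv⟩
    refine ⟨G', hG'prob, ?_, hμ'0, hμ'top, ?_⟩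
    · rw [hG'ap _ (((Set.finite_range x).union (Set.finite_range y)).measurableSet).compl]
      have hpre0 : τ ⁻¹' ((Set.range x ∪ Set.range y)ᶜ) = ∅ := by
        rw [Set.eq_empty_iff_forall_notMem]
        intro v hv
        exact hv (by rw [← hSU]; exact_mod_cast hτS v)
      rw [hpre0, Set.empty_inter, measure_empty, mul_zero]
    · rw [hL, hL]
      exact mul_le_mul' (Finset.prod_le_prod' fun i _ => hfac _ _ (hnx i))
        (Finset.prod_le_prod' fun j _ => hfac _ _ (hny j))
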